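/- Let A be an n×n real matrix all of whose eigenvalues have strictly negative real part, and let b : ℝ → ℝⁿ be continuous and T₀-periodic with T₀ > 0. Then the ODE x' = Ax + b(t) admits a unique T₀-periodic solution, given by the initial condition x₀ = (I - exp(T₀A))⁻¹ exp(T₀A) ∫₀^{T₀} exp(-sA) b(s) ds. -/

import Mathlib

open NormedSpace Set
open scoped Nat Matrix

namespace PeriodicAux
variable {n : ℕ}

/-- matrices to continuous linear maps, as a ring hom -/
noncomputable def toCLM : Matrix (Fin n) (Fin n) ℝ →+* ((Fin n → ℝ) →L[ℝ] (Fin n → ℝ)) where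
  toFun M := LinearMap.toContinuousLinearMap (Matrix.mulVecLin M)
  map_one' := by ext v; simp
  map_mul' M N := by ext v; simp [Matrix.mulVecLin_mul]
  map_zero' := by ext v; simp
  map_add' M N := by ext v i; simp [Matrix.add_mulVec, Pi.add_apply]

@[simp] lemma toCLM_apply (M : Matrix (Fin n) (Fin n) ℝ) (v : Fin n → ℝ) :
    toCLM M v = M.mulVec v := rfl

lemma toCLM_smul (t : ℝ) (M : Matrix (Fin n) (Fin n) ℝ) :
    toCLM (t • M) = t • toCLM M := by
  ext v i
  simp [Matrix.smul_mulVec]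

lemma toCLM_continuous : Continuous (toCLM (n := n)) := by
  letI : NormedAddCommGroup (Matrix (Fin n) (Fin n) ℝ) := Matrix.linftyOpNormedAddCommGroup
  letI : NormedSpace ℝ (Matrix (Fin n) (Fin n) ℝ) := Matrix.linftyOpNormedSpace
  exact LinearMap.continuous_of_finiteDimensional
    { toFun := toCLM (n := n)
      map_add' := fun M N => map_add _ M N
      map_smul' := toCLM_smul }

lemma toCLM_exp (M : Matrix (Fin n) (Fin n) ℝ) :
    toCLM (exp M) = exp (toCLM M) := by
  letI : NormedRing (Matrix (Fin n) (Fin n) ℝ) := Matrix.linftyOpNormedRing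
  letI : NormedAlgebra ℝ (Matrix (Fin n) (Fin n) ℝ) := Matrix.linftyOpNormedAlgebra
  letI : NormedAlgebra ℚ (Matrix (Fin n) (Fin n) ℝ) := .restrictScalars ℚ ℝ _
  exact map_exp toCLM toCLM_continuous M

end PeriodicAux

theorem ode_unique_global {E : Type*} [NormedAddCommGroup E] [NormedSpace ℝ E]
    {v : ℝ → E → E} {K : NNReal} (hv : ∀ t, LipschitzWith K (v t))
    {f g : ℝ → E} (hf : ∀ t, HasDerivAt f (v t (f t)) t)
    (hg : ∀ t, HasDerivAt g (v t (g t)) t) {t₀ : ℝ} (h : f t₀ = g t₀) (t : ℝ) : f t = g t := by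
  set a := min t₀ t - 1
  set c := max t₀ t + 1
  have ht₀ : t₀ ∈ Ioo a c := by
    constructor
    · have := min_le_left t₀ t; simp only [a]; linarith
    · have := le_max_left t₀ t; simp only [c]; linarith
  have ht : t ∈ Icc a c := by
    constructor
    · have := min_le_right t₀ t; simp only [a]; linarith
    · have := le_max_right t₀ t; simp only [c]; linarith
  refine ODE_solution_unique_of_mem_Icc (v := v) (s := fun _ => univ)
    (fun t _ => (hv t).lipschitzOnWith) ht₀
    (fun s _ => (hf s).continuousAt.continuousWithinAt)
    (fun s _ => hf s) (fun _ _ => mem_univ _)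
    (fun s _ => (hg s).continuousAt.continuousWithinAt)
    (fun s _ => hg s) (fun _ _ => mem_univ _) h ht

section Flow
variable {E : Type*} [NormedAddCommGroup E] [NormedSpace ℝ E] [CompleteSpace E]

noncomputable def flowSol (L : E →L[ℝ] E) (b : ℝ → E) (c : E) (t : ℝ) : E :=
  exp (t • L) (c + ∫ s in (0:ℝ)..t, exp ((-s) • L) (b s))

variable {L : E →L[ℝ] E} {b : ℝ → E} (hb : Continuous b)

include hb in
lemma integrand_continuous : Continuous fun s : ℝ => exp ((-s) • L) (b s) := by
  letI : NormedAlgebra ℚ (E →L[ℝ] E) := .restrictScalars ℚ ℝ _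
  exact ((exp_continuous.comp ((continuous_neg).smul continuous_const))).clm_apply hb

set_option synthInstance.maxHeartbeats 400000 in
lemma exp_mul_exp_neg (t : ℝ) : exp (t • L) * exp ((-t) • L) = 1 := by
  letI : NormedAlgebra ℚ (E →L[ℝ] E) := .restrictScalars ℚ ℝ _
  rw [← exp_add_of_commute (((Commute.refl L).smul_left t).smul_right (-t))]
  simp [← add_smul]

include hb in
lemma flowSol_hasDerivAt (c : E) (t : ℝ) :
    HasDerivAt (flowSol L b c) (L (flowSol L b c t) + b t) t := by
  have hy : HasDerivAt (fun u : ℝ => c + ∫ s in (0:ℝ)..u, exp ((-s) • L) (b s))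
      (exp ((-t) • L) (b t)) t := by
    refine HasDerivAt.const_add c ?_
    exact intervalIntegral.integral_hasDerivAt_right
      ((integrand_continuous hb).intervalIntegrable _ _)
      ((integrand_continuous hb).stronglyMeasurable.stronglyMeasurableAtFilter)
      (integrand_continuous hb).continuousAt
  have hM : HasDerivAt (fun u : ℝ => exp (u • L)) (L * exp (t • L)) t :=
    hasDerivAt_exp_smul_const' L t
  have := hM.clm_apply hy
  convert this using 1
  · rfl
  rw [ContinuousLinearMap.mul_apply]
  congr 1
  have : exp (t • L) (exp ((-t) • L) (b t))
      = (exp (t • L) * exp ((-t) • L)) (b t) := rfl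
  rw [this, exp_mul_exp_neg, ContinuousLinearMap.one_apply]

omit [CompleteSpace E] in
lemma flowSol_zero (c : E) : flowSol L b c 0 = c := by
  simp [flowSol, exp_zero]

end Flow

lemma eig_exp {n : ℕ} (N : Matrix (Fin n) (Fin n) ℂ) {z : ℂ} {w : Fin n → ℂ}
    (h : N.mulVec w = z • w) : (exp N).mulVec w = Complex.exp z • w := by
  letI : NormedRing (Matrix (Fin n) (Fin n) ℂ) := Matrix.linftyOpNormedRing
  letI : NormedAlgebra ℝ (Matrix (Fin n) (Fin n) ℂ) := Matrix.linftyOpNormedAlgebra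
  have hpow : ∀ k : ℕ, (N ^ k).mulVec w = z ^ k • w := by
    intro k
    induction k with
    | zero => simp
    | succ k ih =>
        rw [pow_succ', pow_succ', ← Matrix.mulVec_mulVec, ih, Matrix.mulVec_smul, h,
          smul_smul, mul_comm]
  let ψl : Matrix (Fin n) (Fin n) ℂ →ₗ[ℝ] (Fin n → ℂ) :=
    { toFun := fun M => M.mulVec w
      map_add' := fun M₁ M₂ => Matrix.add_mulVec M₁ M₂ w
      map_smul' := fun r M => Matrix.smul_mulVec r M w }
  let ψ : Matrix (Fin n) (Fin n) ℂ →L[ℝ] (Fin n → ℂ) := LinearMap.toContinuousLinearMap ψl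
  have h1 : HasSum (fun k : ℕ => ψ ((k !⁻¹ : ℝ) • N ^ k)) (ψ (exp N)) :=
    (exp_series_hasSum_exp' (𝕂 := ℝ) N).mapL ψ
  have h2 : HasSum (fun k : ℕ => ψ ((k !⁻¹ : ℝ) • N ^ k)) (Complex.exp z • w) := by
    have h3 : HasSum (fun k : ℕ => ((k !⁻¹ : ℂ) • z ^ k) • w) (exp z • w) :=
      (exp_series_hasSum_exp' (𝕂 := ℂ) z).smul_const w
    rw [← Complex.exp_eq_exp_ℂ] at h3
    convert h3 using 2 with k
    show ((k !⁻¹ : ℝ) • N ^ k).mulVec w = _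
    rw [Matrix.smul_mulVec, hpow, ← smul_assoc]
    congr 1
    simp only [smul_eq_mul, Complex.real_smul]
    push_cast
    ring
  have := h1.unique h2
  exact this

lemma isUnit_one_sub_exp {n : ℕ} (A : Matrix (Fin n) (Fin n) ℝ)
    (heig : ∀ (z : ℂ) (v : Fin n → ℂ), v ≠ 0 →
      (A.map (fun a => (a : ℂ))).mulVec v = z • v → z.re < 0)
    {T₀ : ℝ} (hT₀ : 0 < T₀) : IsUnit (1 - exp (T₀ • A)) := by
  rw [Matrix.isUnit_iff_isUnit_det, isUnit_iff_ne_zero]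
  intro hdet
  obtain ⟨v, hv0, hv⟩ := Matrix.exists_mulVec_eq_zero_iff.mpr hdet
  have hEv : (exp (T₀ • A)).mulVec v = v := by
    rw [Matrix.sub_mulVec, Matrix.one_mulVec, sub_eq_zero] at hv
    exact hv.symm
  set F : Matrix (Fin n) (Fin n) ℝ →+* Matrix (Fin n) (Fin n) ℂ :=
    (algebraMap ℝ ℂ).mapMatrix with hF
  have hFc : Continuous F := by
    apply continuous_pi; intro i; apply continuous_pi; intro j
    exact Complex.continuous_ofReal.comp ((continuous_apply j).comp (continuous_apply i))
  have hFexp : F (exp (T₀ • A)) = exp (F (T₀ • A)) := by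
    letI : NormedRing (Matrix (Fin n) (Fin n) ℝ) := Matrix.linftyOpNormedRing
    letI : NormedAlgebra ℝ (Matrix (Fin n) (Fin n) ℝ) := Matrix.linftyOpNormedAlgebra
    letI : NormedRing (Matrix (Fin n) (Fin n) ℂ) := Matrix.linftyOpNormedRing
    letI : NormedAlgebra ℝ (Matrix (Fin n) (Fin n) ℂ) := Matrix.linftyOpNormedAlgebra
    letI : NormedAlgebra ℚ (Matrix (Fin n) (Fin n) ℝ) := .restrictScalars ℚ ℝ _
    exact map_exp F hFc _
  set N : Matrix (Fin n) (Fin n) ℂ := F (T₀ • A) with hN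
  set w : Fin n → ℂ := fun i => (v i : ℂ) with hw
  have hw0 : w ≠ 0 := by
    intro hcon
    apply hv0
    funext i
    have := congrFun hcon i
    simpa [hw] using this
  have hEw : (exp N).mulVec w = w := by
    rw [← hFexp]
    funext i
    rw [hF]
    show ((exp (T₀ • A)).map (algebraMap ℝ ℂ) *ᵥ (⇑(algebraMap ℝ ℂ) ∘ v)) i = w i
    rw [← RingHom.map_mulVec, hEv]
    rfl
  -- the fixed subspace of exp N
  set S : Submodule ℂ (Fin n → ℂ) :=
    LinearMap.ker (Matrix.mulVecLin (exp N) - LinearMap.id) with hS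
  have memS : ∀ u : Fin n → ℂ, u ∈ S ↔ (exp N).mulVec u = u := by
    intro u
    rw [hS, LinearMap.mem_ker, LinearMap.sub_apply, LinearMap.id_apply, sub_eq_zero]
    exact Iff.rfl
  have hwS : w ∈ S := (memS w).mpr hEw
  haveI : Nontrivial S := nontrivial_of_ne ⟨w, hwS⟩ 0 (by simp [hw0])
  have hcomm : Commute N (exp N) := (Commute.refl N).exp_right
  have hinv : ∀ u ∈ S, N.mulVec u ∈ S := by
    intro u hu
    rw [memS] at hu ⊢
    rw [Matrix.mulVec_mulVec, ← hcomm.eq, ← Matrix.mulVec_mulVec, hu]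
  set f : S →ₗ[ℂ] S := (Matrix.mulVecLin N).restrict hinv with hf
  obtain ⟨z, hz⟩ := Module.End.exists_eigenvalue f
  obtain ⟨w₀', hw₀'⟩ := hz.exists_hasEigenvector
  set w₀ : Fin n → ℂ := (w₀' : Fin n → ℂ) with hw₀
  have hw₀0 : w₀ ≠ 0 := fun hcon => hw₀'.2 (Submodule.coe_eq_zero.mp hcon)
  have heigv : N.mulVec w₀ = z • w₀ := by
    have h := hw₀'.apply_eq_smul
    exact congrArg Subtype.val h
  -- exp z = 1
  have hexpz : Complex.exp z = 1 := by
    have h1 := eig_exp N heigv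
    have h2 : (exp N).mulVec w₀ = w₀ := (memS w₀).mp w₀'.2
    rw [h2] at h1
    have h3 : (Complex.exp z - 1) • w₀ = 0 := by
      rw [sub_smul, one_smul, ← h1, sub_self]
    rcases smul_eq_zero.mp h3 with h | h
    · exact sub_eq_zero.mp h
    · exact absurd h hw₀0
  have hT0c : (T₀ : ℂ) ≠ 0 := by exact_mod_cast hT₀.ne'
  have hNsmul : N = (T₀ : ℂ) • (A.map fun a => (a : ℂ)) := by
    funext i j
    show ((algebraMap ℝ ℂ)) ((T₀ • A) i j) = _
    simp [Matrix.smul_apply, smul_eq_mul, Complex.ofReal_mul]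
  rw [hNsmul, Matrix.smul_mulVec] at heigv
  have h4 := congrArg (fun u => (T₀ : ℂ)⁻¹ • u) heigv
  simp only [smul_smul, inv_mul_cancel₀ hT0c, one_smul] at h4
  have h5 := heig _ w₀ hw₀0 h4
  have h6 : ((T₀ : ℂ)⁻¹ * z).re = T₀⁻¹ * z.re := by
    rw [← Complex.ofReal_inv, Complex.re_ofReal_mul]
  rw [h6] at h5
  have h7 : z.re < 0 := by
    by_contra hcon
    push_neg at hcon
    have : 0 ≤ T₀⁻¹ * z.re := mul_nonneg (by positivity) hcon
    linarith
  have h8 : Real.exp z.re = 1 := by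
    have := congrArg norm hexpz
    rwa [Complex.norm_exp, norm_one] at this
  have h9 : z.re = 0 := by
    have h10 : Real.exp z.re = Real.exp 0 := by rw [Real.exp_zero]; exact h8
    exact Real.exp_eq_exp.mp h10
  linarith

/-- If all complex eigenvalues of the real matrix `A` have strictly negative real part and
`b` is continuous and `T₀`-periodic (`T₀ > 0`), then `x' = Ax + b(t)` admits a unique
`T₀`-periodic solution, whose initial condition is
`x₀ = (I - exp(T₀A))⁻¹ exp(T₀A) ∫₀^{T₀} exp(-sA) b(s) ds`. -/
theorem unique_periodic_solution {n : ℕ} (A : Matrix (Fin n) (Fin n) ℝ)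
    (heig : ∀ (z : ℂ) (v : Fin n → ℂ), v ≠ 0 →
      (A.map (fun a => (a : ℂ))).mulVec v = z • v → z.re < 0)
    (T₀ : ℝ) (hT₀ : 0 < T₀)
    (b : ℝ → (Fin n → ℝ)) (hb : Continuous b) (hbper : Function.Periodic b T₀) :
    (∃! x : ℝ → (Fin n → ℝ),
        (∀ t, HasDerivAt x (A.mulVec (x t) + b t) t) ∧ Function.Periodic x T₀) ∧
    (∀ x : ℝ → (Fin n → ℝ),
        (∀ t, HasDerivAt x (A.mulVec (x t) + b t) t) → Function.Periodic x T₀ →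
        x 0 = ((1 - exp (T₀ • A))⁻¹ * exp (T₀ • A)).mulVec
          (∫ s in (0:ℝ)..T₀, (exp ((-s) • A)).mulVec (b s))) := by
  classical
  set EM : Matrix (Fin n) (Fin n) ℝ := exp (T₀ • A) with hEM
  set L : (Fin n → ℝ) →L[ℝ] (Fin n → ℝ) := PeriodicAux.toCLM A with hL
  have hPL : PeriodicAux.toCLM EM = exp (T₀ • L) := by
    rw [hEM, PeriodicAux.toCLM_exp, PeriodicAux.toCLM_smul, hL]
  set P : (Fin n → ℝ) →L[ℝ] (Fin n → ℝ) := exp (T₀ • L) with hP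
  have hU : IsUnit (1 - EM) := isUnit_one_sub_exp A heig hT₀
  obtain ⟨wU, hwU⟩ := hU
  set u : ((Fin n → ℝ) →L[ℝ] (Fin n → ℝ))ˣ :=
    Units.map (PeriodicAux.toCLM.toMonoidHom) wU with hu
  have hu1 : (u : (Fin n → ℝ) →L[ℝ] (Fin n → ℝ)) = 1 - P := by
    rw [hu]
    show PeriodicAux.toCLM (wU : Matrix (Fin n) (Fin n) ℝ) = 1 - P
    rw [hwU, map_sub, map_one, hPL]
  set v : ℝ → (Fin n → ℝ) → (Fin n → ℝ) := fun t z => L z + b t with hv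
  have hlip : ∀ t, LipschitzWith ‖L‖₊ (v t) := fun t =>
    LipschitzWith.of_dist_le_mul fun x y => by
      simp only [hv, dist_add_right]
      exact L.lipschitz.dist_le_mul x y
  set y : ℝ → (Fin n → ℝ) := fun t => ∫ s in (0:ℝ)..t, exp ((-s) • L) (b s) with hy
  set c₀ : Fin n → ℝ := (↑u⁻¹ : (Fin n → ℝ) →L[ℝ] (Fin n → ℝ)) (P (y T₀)) with hc₀
  have hxd : ∀ c t, HasDerivAt (flowSol L b c) (v t (flowSol L b c t)) t := fun c t =>
    flowSol_hasDerivAt hb c t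
  have hx0 : ∀ c : Fin n → ℝ, flowSol L b c 0 = c := flowSol_zero
  have hxT : ∀ c : Fin n → ℝ, flowSol L b c T₀ = P c + P (y T₀) := by
    intro c
    have h1 : flowSol L b c T₀ = P (c + y T₀) := rfl
    rw [h1, map_add]
  have huinv : ∀ z : Fin n → ℝ,
      (↑u : (Fin n → ℝ) →L[ℝ] (Fin n → ℝ)) ((↑u⁻¹ : (Fin n → ℝ) →L[ℝ] (Fin n → ℝ)) z) = z := by
    intro z
    have h1 : (↑u * ↑u⁻¹ : (Fin n → ℝ) →L[ℝ] (Fin n → ℝ)) = 1 := by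
      rw [u.mul_inv]
    calc (↑u : (Fin n → ℝ) →L[ℝ] (Fin n → ℝ)) ((↑u⁻¹ : (Fin n → ℝ) →L[ℝ] (Fin n → ℝ)) z)
        = (↑u * ↑u⁻¹ : (Fin n → ℝ) →L[ℝ] (Fin n → ℝ)) z := rfl
      _ = z := by rw [h1]; rfl
  have huinv' : ∀ z : Fin n → ℝ,
      (↑u⁻¹ : (Fin n → ℝ) →L[ℝ] (Fin n → ℝ)) ((↑u : (Fin n → ℝ) →L[ℝ] (Fin n → ℝ)) z) = z := by
    intro z
    have h1 : (↑u⁻¹ * ↑u : (Fin n → ℝ) →L[ℝ] (Fin n → ℝ)) = 1 := by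
      rw [u.inv_mul]
    calc (↑u⁻¹ : (Fin n → ℝ) →L[ℝ] (Fin n → ℝ)) ((↑u : (Fin n → ℝ) →L[ℝ] (Fin n → ℝ)) z)
        = (↑u⁻¹ * ↑u : (Fin n → ℝ) →L[ℝ] (Fin n → ℝ)) z := rfl
      _ = z := by rw [h1]; rfl
  have hfixc₀ : flowSol L b c₀ T₀ = c₀ := by
    rw [hxT]
    have h1 : (↑u : (Fin n → ℝ) →L[ℝ] (Fin n → ℝ)) c₀ = P (y T₀) := by
      rw [hc₀]; exact huinv _
    rw [hu1] at h1
    have h2 : c₀ - P c₀ = P (y T₀) := by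
      rw [← h1]; simp [ContinuousLinearMap.sub_apply]
    rw [← h2]
    abel
  -- any global solution is flowSol of its initial value
  have hsol_eq : ∀ x : ℝ → (Fin n → ℝ), (∀ t, HasDerivAt x (v t (x t)) t) →
      ∀ t, x t = flowSol L b (x 0) t := by
    intro x hx t
    exact ode_unique_global hlip hx (hxd (x 0)) (t₀ := 0) (by rw [hx0]) t
  -- periodicity of the canonical solution
  have hper : Function.Periodic (flowSol L b c₀) T₀ := by
    have hz : ∀ s, HasDerivAt (fun r => flowSol L b c₀ (r + T₀))
        (v s (flowSol L b c₀ (s + T₀))) s := by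
      intro s
      have h1 := hxd c₀ (s + T₀)
      have h2 : HasDerivAt (fun r : ℝ => r + T₀) 1 s := (hasDerivAt_id s).add_const T₀
      have h3 := HasDerivAt.scomp s h1 h2
      simp only [one_smul] at h3
      have h4 : v (s + T₀) (flowSol L b c₀ (s + T₀)) = v s (flowSol L b c₀ (s + T₀)) := by
        simp only [hv, hbper s]
      rw [h4] at h3
      exact h3
    intro t
    have key := ode_unique_global hlip hz (hxd c₀) (t₀ := 0)
      (by rw [zero_add, hfixc₀, hx0]) t
    exact key
  -- any periodic solution has initial value c₀
  have hinit : ∀ x : ℝ → (Fin n → ℝ), (∀ t, HasDerivAt x (v t (x t)) t) →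
      Function.Periodic x T₀ → x 0 = c₀ := by
    intro x hx hxper
    have hvar := hsol_eq x hx
    have hfix : x T₀ = x 0 := by
      have := hxper 0; rwa [zero_add] at this
    have h1 : P (x 0) + P (y T₀) = x 0 := by
      rw [← hxT (x 0), ← hvar T₀, hfix]
    have h2 : (↑u : (Fin n → ℝ) →L[ℝ] (Fin n → ℝ)) (x 0) = P (y T₀) := by
      rw [hu1]
      simp only [ContinuousLinearMap.sub_apply, ContinuousLinearMap.one_apply]
      exact sub_eq_of_eq_add' h1.symm
    have h3 := congrArg (fun z => (↑u⁻¹ : (Fin n → ℝ) →L[ℝ] (Fin n → ℝ)) z) h2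
    rw [huinv'] at h3
    rw [h3, hc₀]
  constructor
  · refine ⟨flowSol L b c₀, ⟨fun t => hxd c₀ t, hper⟩, ?_⟩
    intro x hx
    have h0 : x 0 = c₀ := hinit x (fun t => hx.1 t) hx.2
    funext t
    rw [hsol_eq x (fun t => hx.1 t) t, h0]
  · intro x hx hxper
    have h0 : x 0 = c₀ := hinit x (fun t => hx t) hxper
    rw [h0, hc₀]
    -- translate the formula to matrices
    have hI : (∫ s in (0:ℝ)..T₀, (exp ((-s) • A)).mulVec (b s)) = y T₀ := by
      rw [hy]
      apply intervalIntegral.integral_congr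
      intro s _
      show (exp ((-s) • A)).mulVec (b s) = exp ((-s) • L) (b s)
      rw [hL, ← PeriodicAux.toCLM_smul, ← PeriodicAux.toCLM_exp, PeriodicAux.toCLM_apply]
    rw [hI]
    have hinvE : (1 - EM)⁻¹ = (↑wU⁻¹ : Matrix (Fin n) (Fin n) ℝ) := by
      rw [← hwU, Matrix.coe_units_inv]
    rw [hinvE]
    have hmap_inv : PeriodicAux.toCLM (↑wU⁻¹ : Matrix (Fin n) (Fin n) ℝ)
        = (↑u⁻¹ : (Fin n → ℝ) →L[ℝ] (Fin n → ℝ)) := by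
      rfl
    show (↑u⁻¹ : (Fin n → ℝ) →L[ℝ] (Fin n → ℝ)) (P (y T₀))
        = PeriodicAux.toCLM ((↑wU⁻¹ : Matrix (Fin n) (Fin n) ℝ) * EM) (y T₀)
    rw [map_mul, hmap_inv, hPL]
    rfl
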